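/- For α ∈ [-1/2,∞)^d, x ∈ (0,∞)^d and t > 0, let V_t^{α,+}(x) = Πⱼ V_t^{α_j,+}(x_j) where V_t^{α_j,+}(x_j) is the w_{α_j}⁺-measure of (x_j−t, x_j+t) ∩ (0,∞). Then V_t^{α,+}(x) ≃ t^d · Πⱼ₌₁^d (x_j+t)^{2α_j+1}, uniformly in x and t. -/

import Mathlib

open MeasureTheory Real Set

/-- `V_t^{α_j,+}(x_j)`: the `w_{α_j}⁺`-measure of `(x_j−t, x_j+t) ∩ (0,∞)`. -/
noncomputable def V1 (α t x : ℝ) : ℝ :=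
  ∫ s in Ioo (max (x - t) 0) (x + t), s ^ (2*α + 1)

lemma v1_bounds (α x t : ℝ) (hα : -(1/2:ℝ) ≤ α) (hx : 0 < x) (ht : 0 < t) :
    (1/2:ℝ)^(2*α+2) * (t * (x+t)^(2*α+1)) ≤ V1 α t x ∧
    V1 α t x ≤ 2 * (t * (x+t)^(2*α+1)) := by
  set p : ℝ := 2*α+1 with hpdef
  have hp : 0 ≤ p := by simp only [hpdef]; linarith
  set a : ℝ := max (x - t) 0 with hadef
  set b : ℝ := x + t with hbdef
  have hb : 0 < b := by positivity
  have ha0 : 0 ≤ a := le_max_right _ _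
  have hab : a < b := by
    apply max_lt <;> [linarith; positivity]
  have hba1 : b - a ≤ 2*t := by
    have : x - t ≤ a := le_max_left _ _
    linarith
  have hba2 : t ≤ b - a := by
    rcases le_or_gt (x - t) 0 with h | h
    · have : a = 0 := max_eq_right h
      rw [this]; simp only [hbdef]; linarith
    · have : a = x - t := max_eq_left h.le
      rw [this]; simp only [hbdef]; linarith
  have hcont : Continuous (fun s : ℝ => s ^ p) := by
    rw [continuous_iff_continuousAt]
    exact fun s => Real.continuousAt_rpow_const s p (Or.inr hp)
  have hint : IntegrableOn (fun s : ℝ => s ^ p) (Ioo a b) := by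
    exact hcont.continuousOn.integrableOn_Icc.mono_set Ioo_subset_Icc_self
  constructor
  · -- lower bound
    set m : ℝ := max a (b/2) with hmdef
    have hmb : m < b := by
      apply max_lt hab; linarith
    have hm0 : 0 < m := lt_of_lt_of_le (by linarith : (0:ℝ) < b/2) (le_max_right _ _)
    have hsub : Ioo m b ⊆ Ioo a b := Ioo_subset_Ioo (le_max_left _ _) le_rfl
    have h1 : ∫ s in Ioo m b, (b/2) ^ p ≤ ∫ s in Ioo m b, s ^ p := by
      apply setIntegral_mono_on (integrableOn_const measure_Ioo_lt_top.ne)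
        (hint.mono_set hsub) measurableSet_Ioo
      intro s hs
      exact Real.rpow_le_rpow (by linarith) (le_trans (le_max_right _ _) hs.1.le) hp
    have h2 : ∫ s in Ioo m b, s ^ p ≤ V1 α t x := by
      apply setIntegral_mono_set hint ?_ (HasSubset.Subset.eventuallyLE hsub)
      filter_upwards [ae_restrict_mem measurableSet_Ioo] with s hs
      exact Real.rpow_nonneg (le_trans ha0 hs.1.le) p
    have h3 : ∫ s in Ioo m b, (b/2) ^ p = (b/2)^p * (b - m) := by
      rw [setIntegral_const, Real.volume_real_Ioo, max_eq_left (by linarith), smul_eq_mul]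
      ring
    have h4 : t/2 ≤ b - m := by
      rcases max_cases a (b/2) with ⟨h,_⟩ | ⟨h,_⟩ <;> rw [hmdef, h] <;> linarith
    have h5 : (1/2:ℝ)^(2*α+2) * (t * b^p) ≤ (b/2)^p * (b - m) := by
      have hbp : (b/2)^p = (1/2:ℝ)^p * b^p := by
        rw [div_eq_mul_inv, mul_comm, ← Real.mul_rpow (by norm_num) hb.le]
        norm_num
      have he : (1/2:ℝ)^(2*α+2) = (1/2:ℝ)^p * (1/2:ℝ) := by
        rw [show (1/2:ℝ)^p * (1/2:ℝ) = (1/2:ℝ)^p * (1/2:ℝ)^(1:ℝ) by rw [Real.rpow_one],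
          ← Real.rpow_add (by norm_num)]
        congr 1; rw [hpdef]; ring
      calc (1/2:ℝ)^(2*α+2) * (t * b^p) = ((1/2:ℝ)^p * b^p) * (t/2) := by rw [he]; ring
        _ ≤ (b/2)^p * (b - m) := by
            rw [hbp]
            apply mul_le_mul_of_nonneg_left h4
            positivity
    linarith
  · -- upper bound
    have h1 : V1 α t x ≤ ∫ s in Ioo a b, b ^ p := by
      apply setIntegral_mono_on hint (integrableOn_const measure_Ioo_lt_top.ne)
        measurableSet_Ioo
      intro s hs
      exact Real.rpow_le_rpow (le_trans ha0 hs.1.le) hs.2.le hp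
    have h2 : ∫ s in Ioo a b, b ^ p = b^p * (b - a) := by
      rw [setIntegral_const, Real.volume_real_Ioo, max_eq_left (by linarith), smul_eq_mul]
      ring
    have h3 : b^p * (b - a) ≤ 2 * (t * b^p) := by
      have : b^p * (b-a) ≤ b^p * (2*t) :=
        mul_le_mul_of_nonneg_left hba1 (Real.rpow_nonneg hb.le p)
      linarith
    linarith

theorem stmt9 {d : ℕ} (α : Fin d → ℝ) (hα : ∀ j, -(1/2 : ℝ) ≤ α j) :
    ∃ c₁ c₂ : ℝ, 0 < c₁ ∧ 0 < c₂ ∧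
      ∀ (x : Fin d → ℝ) (t : ℝ), (∀ j, 0 < x j) → 0 < t →
        c₁ * (t ^ d * ∏ j, (x j + t) ^ (2 * α j + 1)) ≤ ∏ j, V1 (α j) t (x j) ∧
        ∏ j, V1 (α j) t (x j) ≤ c₂ * (t ^ d * ∏ j, (x j + t) ^ (2 * α j + 1)) := by
  refine ⟨∏ j, (1/2:ℝ)^(2*α j+2), 2^d, Finset.prod_pos (fun j _ => by positivity),
    by positivity, ?_⟩
  intro x t hx ht
  have hlow := fun j => (v1_bounds (α j) (x j) t (hα j) (hx j) ht).1
  have hup := fun j => (v1_bounds (α j) (x j) t (hα j) (hx j) ht).2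
  constructor
  · calc (∏ j, (1/2:ℝ)^(2*α j+2)) * (t ^ d * ∏ j, (x j + t) ^ (2 * α j + 1))
        = ∏ j, ((1/2:ℝ)^(2*α j+2) * (t * (x j + t) ^ (2 * α j + 1))) := by
          rw [Finset.prod_mul_distrib, Finset.prod_mul_distrib, Finset.prod_const,
            Finset.card_univ, Fintype.card_fin]
      _ ≤ ∏ j, V1 (α j) t (x j) :=
          Finset.prod_le_prod (fun j _ => by have := hx j; positivity) (fun j _ => hlow j)
  · calc ∏ j, V1 (α j) t (x j)
        ≤ ∏ j, (2 * (t * (x j + t) ^ (2 * α j + 1))) :=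
          Finset.prod_le_prod (fun j _ => le_trans (by have := hx j; positivity) (hlow j))
            (fun j _ => hup j)
      _ = (2:ℝ)^d * (t ^ d * ∏ j, (x j + t) ^ (2 * α j + 1)) := by
          rw [Finset.prod_mul_distrib, Finset.prod_mul_distrib, Finset.prod_const,
            Finset.prod_const, Finset.card_univ, Fintype.card_fin]
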